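/- For every complete multipartite graph G with k nonempty parts on vertex set [n], codeg(P_G) = k + 1. -/

import Mathlib

open Finset

noncomputable section

/-- The dilation `kP` of a set `P ⊆ ℝ^ι`. -/
def dilate {ι : Type*} (k : ℕ) (P : Set (ι → ℝ)) : Set (ι → ℝ) :=
  (fun x => (k : ℝ) • x) '' P

/-- A point of `ℝ^ι` is a lattice point if all its coordinates are integers. -/
def IsLatticePt {ι : Type*} (x : ι → ℝ) : Prop := ∀ i, ∃ m : ℤ, x i = m

/-- The codegree of a (full-dimensional lattice) polytope `P ⊆ ℝ^ι`: the smallest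
positive integer `k` such that the interior of `kP` contains a lattice point. -/
def codeg {ι : Type*} (P : Set (ι → ℝ)) : ℕ :=
  sInf {k | 0 < k ∧ ∃ x, IsLatticePt x ∧ x ∈ interior (dilate k P)}

/-- The stable set polytope of a simple graph: the convex hull of the indicator
vectors of the stable (independent) sets of `G`. -/
def stablePolytope {V : Type*} (G : SimpleGraph V) : Set (V → ℝ) :=
  convexHull ℝ {x | ∃ S : Set V, (∀ u ∈ S, ∀ v ∈ S, ¬ G.Adj u v) ∧
    x = S.indicator (fun _ => (1 : ℝ))}

lemma interior_lt {ι : Type*} {D : Set (ι → ℝ)} {ℓ : (ι → ℝ) → ℝ}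
    (hlin : IsLinearMap ℝ ℓ) {c : ℝ} (hD : ∀ y ∈ D, ℓ y ≤ c)
    {w : ι → ℝ} (hw : 0 < ℓ w) {x : ι → ℝ} (hx : x ∈ interior D) : ℓ x < c := by
  refine lt_of_le_of_ne (hD x (interior_subset hx)) ?_
  intro heq
  have hcont : Continuous fun t : ℝ => x + t • w := by continuity
  have key : Filter.Tendsto (fun t : ℝ => x + t • w) (nhdsWithin 0 (Set.Ioi 0)) (nhds x) := by
    have h := (hcont.tendsto 0).mono_left (nhdsWithin_le_nhds (s := Set.Ioi (0:ℝ)))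
    simpa using h
  have hev : ∀ᶠ t : ℝ in nhdsWithin 0 (Set.Ioi 0), x + t • w ∈ interior D :=
    key.eventually_mem (isOpen_interior.mem_nhds hx)
  have hpos : ∀ᶠ t in nhdsWithin (0:ℝ) (Set.Ioi 0), t ∈ Set.Ioi (0:ℝ) := self_mem_nhdsWithin
  obtain ⟨t, htD, ht0⟩ := (hev.and hpos).exists
  have h1 : ℓ (x + t • w) ≤ c := hD _ (interior_subset htD)
  have h2 : ℓ (x + t • w) = ℓ x + t * ℓ w := by
    rw [hlin.map_add, hlin.map_smul]; rfl
  have : 0 < t * ℓ w := mul_pos ht0 hw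
  rw [h2, heq] at h1
  linarith

/-- For a complete multipartite graph `G` with `k` nonempty parts (the fibers of a
surjection `f` onto `Fin k`), `codeg(P_G) = k + 1`. -/
theorem stmt14 {n k : ℕ} (G : SimpleGraph (Fin n)) (f : Fin n → Fin k)
    (hsurj : Function.Surjective f)
    (hG : ∀ u v, G.Adj u v ↔ f u ≠ f v) :
    codeg (stablePolytope G) = k + 1 := by
  classical
  set gens : Set (Fin n → ℝ) := {x | ∃ S : Set (Fin n), (∀ u ∈ S, ∀ v ∈ S, ¬ G.Adj u v) ∧
    x = S.indicator (fun _ => (1 : ℝ))} with hgens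
  have hPdef : stablePolytope G = convexHull ℝ gens := rfl
  set g : Fin k → Fin n := Function.surjInv hsurj with hgdef
  have hfg : ∀ j, f (g j) = j := fun j => Function.surjInv_eq hsurj j
  -- valid inequalities on P
  have hnonneg : ∀ p ∈ stablePolytope G, ∀ v, 0 ≤ p v := by
    intro p hp v
    have hconv : Convex ℝ {q : Fin n → ℝ | 0 ≤ q v} :=
      convex_halfSpace_ge (LinearMap.proj v : (Fin n → ℝ) →ₗ[ℝ] ℝ).isLinear 0
    refine convexHull_min ?_ hconv hp
    rintro q ⟨S, -, rfl⟩
    exact Set.indicator_nonneg (fun a _ => (zero_le_one : (0:ℝ) ≤ 1)) v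
  have hsumlin : IsLinearMap ℝ (fun q : Fin n → ℝ => ∑ j, q (g j)) := by
    constructor
    · intro p q; simp [Finset.sum_add_distrib]
    · intro c p; simp [Finset.mul_sum]
  have htrans : ∀ p ∈ stablePolytope G, ∑ j, p (g j) ≤ 1 := by
    intro p hp
    refine convexHull_min ?_ (convex_halfSpace_le hsumlin 1) hp
    rintro q ⟨S, hS, rfl⟩
    have key : ∑ j, S.indicator (fun _ => (1:ℝ)) (g j)
        = ((univ.filter (fun j => g j ∈ S)).card : ℝ) := by
      rw [Finset.card_filter]
      push_cast
      refine Finset.sum_congr rfl fun j _ => ?_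
      rw [Set.indicator_apply]
    simp only [Set.mem_setOf_eq]
    rw [key]
    have hcard : (univ.filter (fun j => g j ∈ S)).card ≤ 1 := by
      refine Finset.card_le_one.mpr ?_
      intro a ha b hb
      simp only [Finset.mem_filter] at ha hb
      have hna := hS _ ha.2 _ hb.2
      rw [hG] at hna
      have heq : f (g a) = f (g b) := not_not.mp hna
      rwa [hfg, hfg] at heq
    exact_mod_cast hcard
  -- upper bound: all-ones in interior of dilate (k+1) P
  set ε : ℝ := 1 / (k + 2*n + 1) with hεdef
  have hε0 : 0 < ε := by positivity
  have hε1 : ε ≤ 1 := by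
    rw [hεdef, div_le_one (by positivity)]
    have h1 : (0:ℝ) ≤ (k:ℝ) := by positivity
    have h2 : (0:ℝ) ≤ (n:ℝ) := by positivity
    linarith
  set c : ℝ := (k:ℝ) + 1 with hcdef
  have hc0 : (0:ℝ) < c := by positivity
  have hεe : ε * ((k:ℝ) + 2*n + 1) = 1 := by
    rw [hεdef]; field_simp
  have hU : ∀ x : Fin n → ℝ, (∀ v, |x v - 1| < ε) → x ∈ dilate (k+1) (stablePolytope G) := by
    intro x hx
    have hxlow : ∀ v, 1 - ε < x v := fun v => by
      have h := abs_lt.mp (hx v); linarith [h.1]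
    have hxhigh : ∀ v, x v < 1 + ε := fun v => by
      have h := abs_lt.mp (hx v); linarith [h.2]
    set a : ℝ := (1 - ε)/c with hadef
    set b : Fin n → ℝ := fun v => (x v - 1 + ε)/c with hbdef
    set wt : Option (Fin k ⊕ Fin n) → ℝ :=
      fun o => o.elim (1 - k*a - ∑ v, b v) (Sum.elim (fun _ => a) b) with hwtdef
    set z : Option (Fin k ⊕ Fin n) → (Fin n → ℝ) :=
      fun o => o.elim 0 (Sum.elim (fun j => (f ⁻¹' {j}).indicator fun _ => (1:ℝ))
        (fun v => ({v} : Set (Fin n)).indicator fun _ => (1:ℝ))) with hzdef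
    have ha0 : 0 ≤ a := by
      apply div_nonneg _ hc0.le; linarith
    have hb0 : ∀ v, 0 ≤ b v := by
      intro v; apply div_nonneg _ hc0.le; have := hxlow v; linarith
    have hbsum : ∑ v, b v ≤ n * (2*ε/c) := by
      calc ∑ v, b v ≤ ∑ _v : Fin n, 2*ε/c := by
            refine Finset.sum_le_sum fun v _ => ?_
            show (x v - 1 + ε)/c ≤ 2*ε/c
            have h := hxhigh v
            gcongr
            linarith
        _ = n * (2*ε/c) := by
            rw [Finset.sum_const, Finset.card_univ, Fintype.card_fin, nsmul_eq_mul]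
    have hw0 : 0 ≤ 1 - k*a - ∑ v, b v := by
      have hka : (k:ℝ)*a = (k:ℝ)*(1-ε)/c := by rw [hadef]; ring
      have hkey : (k:ℝ)*(1-ε)/c + (n:ℝ)*(2*ε/c) ≤ 1 := by
        have hrw : (n:ℝ) * (2*ε/c) = (n:ℝ)*(2*ε)/c := by ring
        rw [hrw, ← add_div, div_le_one hc0, hcdef]
        have hkε : 0 ≤ (k:ℝ)*ε := by positivity
        nlinarith [hεe, hε0]
      have := hbsum
      nlinarith [hka]
    have hwtnn : ∀ o, 0 ≤ wt o := by
      rintro (_ | j | v)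
      · exact hw0
      · exact ha0
      · exact hb0 v
    have hsum1 : ∑ o, wt o = 1 := by
      rw [Fintype.sum_option, Fintype.sum_sum_type]
      simp only [hwtdef, Option.elim, Sum.elim_inl, Sum.elim_inr]
      rw [Finset.sum_const, Finset.card_univ, Fintype.card_fin, nsmul_eq_mul]
      ring
    have hzm : ∀ o, z o ∈ gens := by
      rintro (_ | j | v)
      · exact ⟨∅, by simp, by funext v; simp [hzdef]⟩
      · refine ⟨f ⁻¹' {j}, ?_, rfl⟩
        intro u hu w hw
        rw [hG, not_ne_iff]
        simp only [Set.mem_preimage, Set.mem_singleton_iff] at hu hw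
        rw [hu, hw]
      · refine ⟨{v}, ?_, rfl⟩
        intro u hu w hw
        simp only [Set.mem_singleton_iff] at hu hw
        subst hu; subst hw
        exact G.irrefl
    have hcomb : ∑ o, wt o • z o = c⁻¹ • x := by
      funext v
      rw [Finset.sum_apply]
      rw [Fintype.sum_option, Fintype.sum_sum_type]
      simp only [hwtdef, hzdef, Option.elim, Sum.elim_inl, Sum.elim_inr, Pi.smul_apply,
        smul_eq_mul, Pi.zero_apply, mul_zero, Set.indicator_apply, Set.mem_preimage,
        Set.mem_singleton_iff, mul_ite, mul_one]
      rw [Finset.sum_ite_eq univ (f v) (fun _ => a)]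
      rw [Finset.sum_ite_eq univ v b]
      simp only [Finset.mem_univ, if_true, zero_add]
      simp only [hadef, hbdef]
      field_simp
      ring
    have hyP : c⁻¹ • x ∈ stablePolytope G := by
      rw [hPdef, ← hcomb]
      have hmem := Finset.centerMass_mem_convexHull (univ : Finset (Option (Fin k ⊕ Fin n)))
        (fun o _ => hwtnn o) (by rw [hsum1]; norm_num) (fun o (_ : o ∈ univ) => hzm o)
      rwa [Finset.centerMass_eq_of_sum_1 _ _ hsum1] at hmem
    refine ⟨c⁻¹ • x, hyP, ?_⟩
    have hck : ((k+1:ℕ):ℝ) = c := by rw [hcdef]; push_cast; ring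
    show ((k+1:ℕ):ℝ) • (c⁻¹ • x) = x
    rw [hck, smul_smul, mul_inv_cancel₀ hc0.ne', one_smul]
  have h1mem : (fun _ => (1:ℝ)) ∈ interior (dilate (k+1) (stablePolytope G)) := by
    rw [mem_interior]
    refine ⟨{x : Fin n → ℝ | ∀ v, |x v - 1| < ε}, fun x hx => hU x hx, ?_, ?_⟩
    · have hset : {x : Fin n → ℝ | ∀ v, |x v - 1| < ε}
          = ⋂ v, (fun x : Fin n → ℝ => x v) ⁻¹' Metric.ball 1 ε := by
        ext x
        simp [Real.dist_eq]
      rw [hset]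
      exact isOpen_iInter_of_finite fun v =>
        (Metric.isOpen_ball).preimage (continuous_apply v)
    · intro v; simpa using hε0
  have hmemS : (k+1) ∈ {m | 0 < m ∧ ∃ x, IsLatticePt x ∧
      x ∈ interior (dilate m (stablePolytope G))} :=
    ⟨Nat.succ_pos k, fun _ => 1, fun v => ⟨1, by norm_num⟩, h1mem⟩
  have hlb : ∀ m ∈ {m | 0 < m ∧ ∃ x, IsLatticePt x ∧
      x ∈ interior (dilate m (stablePolytope G))}, k+1 ≤ m := by
    rintro m ⟨hm0, x, hlat, hxint⟩
    by_contra hcon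
    push_neg at hcon
    have hmk : m ≤ k := by omega
    have hk1 : 1 ≤ k := le_trans hm0 hmk
    have hDnn : ∀ y ∈ dilate m (stablePolytope G), ∀ v, 0 ≤ y v := by
      rintro y ⟨p, hp, rfl⟩ v
      show (0:ℝ) ≤ (m:ℝ) * p v
      exact mul_nonneg (by positivity) (hnonneg p hp v)
    have hDtr : ∀ y ∈ dilate m (stablePolytope G), ∑ j, y (g j) ≤ (m:ℝ) := by
      rintro y ⟨p, hp, rfl⟩
      have hrw : ∑ j, ((m:ℝ) • p) (g j) = (m:ℝ) * ∑ j, p (g j) := by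
        simp [Finset.mul_sum]
      show ∑ j, ((m:ℝ) • p) (g j) ≤ (m:ℝ)
      rw [hrw]
      calc (m:ℝ) * ∑ j, p (g j) ≤ (m:ℝ) * 1 := by
            have h := htrans p hp
            have hm0' : (0:ℝ) ≤ m := by positivity
            nlinarith
        _ = m := mul_one _
    have hposgj : ∀ j, 0 < x (g j) := by
      intro j
      have hlinneg : IsLinearMap ℝ (fun q : Fin n → ℝ => -(q (g j))) := by
        constructor <;> intros <;>
          simp [Pi.add_apply, Pi.smul_apply, smul_eq_mul] <;> ring
      have hres := interior_lt hlinneg (c := 0)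
        (fun y hy => by simpa using (hDnn y hy (g j)))
        (w := fun _ => (-1:ℝ)) (by norm_num) hxint
      simpa using hres
    have hge1 : ∀ j, (1:ℝ) ≤ x (g j) := by
      intro j
      obtain ⟨mz, hmz⟩ := hlat (g j)
      have h0 : (0:ℝ) < (mz:ℝ) := hmz ▸ hposgj j
      have h0' : (0:ℤ) < mz := by exact_mod_cast h0
      rw [hmz]
      exact_mod_cast h0'
    have hsumge : (k:ℝ) ≤ ∑ j, x (g j) := by
      calc (k:ℝ) = ∑ _j : Fin k, (1:ℝ) := by simp
        _ ≤ ∑ j, x (g j) := Finset.sum_le_sum fun j _ => hge1 j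
    have hlt : ∑ j, x (g j) < (m:ℝ) := by
      refine interior_lt hsumlin hDtr (w := fun _ => (1:ℝ)) ?_ hxint
      show (0:ℝ) < ∑ _j : Fin k, (1:ℝ)
      rw [Finset.sum_const, Finset.card_univ, Fintype.card_fin, nsmul_eq_mul, mul_one]
      exact_mod_cast hk1
    have hkm : (k:ℝ) < m := lt_of_le_of_lt hsumge hlt
    have : k < m := by exact_mod_cast hkm
    omega
  have hco : codeg (stablePolytope G) = sInf {m | 0 < m ∧ ∃ x, IsLatticePt x ∧
      x ∈ interior (dilate m (stablePolytope G))} := rfl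
  rw [hco]
  exact le_antisymm (Nat.sInf_le hmemS) (le_csInf ⟨_, hmemS⟩ hlb)
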